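/- arXiv:1808.08854 — 3 statements merged into one kernel-verified Lean document; each statement's English description precedes it below -/
import Mathlib

section
/- Let q be a prime power, n ≥ 2, let s be an integer coprime to n, and let σ : F_{q^n} → F_{q^n} be the automorphism x ↦ x^(q^s). Let φ₁, φ₂ : F_{q^n} → F_{q^n} be additive maps and let 1 ≤ k ≤ n−1. Suppose that N(φ₁(a)) ≠ (−1)^(nk) · N(φ₂(a)) for every nonzero a ∈ F_{q^n}, where N : F_{q^n} → F_q is the field norm, N(x) = x^((q^n−1)/(q−1)). Then the set H_k(φ₁,φ₂) of F_q-linear maps { x ↦ φ₁(a)·x + Σ_{i=1}^{k−1} f_i·x^(q^(s·i)) + φ₂(a)·x^(q^(s·k)) : a, f₁, …, f_{k−1} ∈ F_{q^n} } is an additive subgroup of the F_q-linear endomorphisms of F_{q^n} of cardinality q^(n·k), and every nonzero element of H_k(φ₁,φ₂) has rank at least n − k + 1 as an F_q-linear map. -/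
open Finset
set_option linter.unusedSectionVars false

namespace TwistedGab

variable {F K : Type*} [Field F] [Fintype F] [Field K] [Algebra F K]

lemma frob_add (j : ℕ) (x y : K) :
    (x + y) ^ Fintype.card F ^ j = x ^ Fintype.card F ^ j + y ^ Fintype.card F ^ j := by
  set p := ringChar F with hp
  haveI : CharP F p := ringChar.charP F
  have hprime : p.Prime := CharP.char_is_prime F p
  haveI : CharP K p := charP_of_injective_algebraMap (algebraMap F K).injective p
  haveI : Fact p.Prime := ⟨hprime⟩
  obtain ⟨t, -, hcard⟩ := FiniteField.card F p
  rw [hcard, ← pow_mul]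
  exact add_pow_char_pow x y p _

lemma frob_coeff (j : ℕ) (α : F) : α ^ Fintype.card F ^ j = α :=
  FiniteField.pow_card_pow j α

/-- The Frobenius-power linear map `x ↦ x^(q^j)`. -/
def tau (F : Type*) [Field F] [Fintype F] {K : Type*} [Field K] [Algebra F K] (j : ℕ) :
    K →ₗ[F] K where
  toFun x := x ^ Fintype.card F ^ j
  map_add' x y := frob_add j x y
  map_smul' α x := by
    simp only [RingHom.id_apply, smul_pow, frob_coeff]

@[simp] lemma tau_apply (j : ℕ) (x : K) : tau F j x = x ^ Fintype.card F ^ j := rfl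

/-- The linearized polynomial map with coefficients `d` and σ-degree (bound) `m`,
where σ = Frobenius^s. -/
def Pmap (F : Type*) [Field F] [Fintype F] {K : Type*} [Field K] [Algebra F K]
    (s : ℕ) (d : ℕ → K) (m : ℕ) : K →ₗ[F] K :=
  ∑ i ∈ Finset.range (m + 1), (LinearMap.mul F K (d i)).comp (tau F (s * i))

lemma Pmap_apply (s : ℕ) (d : ℕ → K) (m : ℕ) (x : K) :
    Pmap F s d m x = ∑ i ∈ Finset.range (m + 1), d i * x ^ Fintype.card F ^ (s * i) := by
  simp [Pmap, LinearMap.sum_apply]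

end TwistedGab

namespace TwistedGab

variable {F K : Type*} [Field F] [Fintype F] [Field K] [Algebra F K]

lemma pow_pow_iter {x : K} {c : ℕ} (h : x ^ c = x) (a : ℕ) : x ^ c ^ a = x := by
  induction a with
  | zero => simp
  | succ a ih => rw [pow_succ, pow_mul, ih, h]

section Ext

variable [Fintype K] {n s : ℕ}

lemma fixed_pow_card (hn : 2 ≤ n) (hs : Nat.Coprime s n)
    (hcard : Fintype.card K = Fintype.card F ^ n)
    {x : K} (hx : x ^ Fintype.card F ^ s = x) : x ^ Fintype.card F = x := by
  set q := Fintype.card F with hq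
  obtain ⟨m, -, hm⟩ := Nat.exists_mul_mod_eq_one_of_coprime hs (lt_of_lt_of_le one_lt_two hn)
  have hdm : s * m = n * (s * m / n) + 1 := by
    conv_lhs => rw [← Nat.div_add_mod (s * m) n, hm]
  have h1 : x ^ q ^ (s * m) = x := by
    rw [pow_mul]
    exact pow_pow_iter hx m
  have h2 : x ^ q ^ (n * (s * m / n)) = x := by
    rw [pow_mul]
    have : x ^ q ^ n = x := by rw [← hcard]; exact FiniteField.pow_card x
    exact pow_pow_iter this _
  calc x ^ q = (x ^ q ^ (n * (s * m / n))) ^ q := by rw [h2]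
    _ = x ^ q ^ (n * (s * m / n) + 1) := by rw [← pow_mul, pow_succ]
    _ = x ^ q ^ (s * m) := by rw [← hdm]
    _ = x := h1

lemma fixed_mem (hn : 2 ≤ n) (hs : Nat.Coprime s n)
    (hcard : Fintype.card K = Fintype.card F ^ n)
    {x : K} (hx : x ^ Fintype.card F ^ s = x) :
    ∃ α : F, algebraMap F K α = x := by
  set q := Fintype.card F with hq
  have hxq : x ^ q = x := fixed_pow_card hn hs hcard hx
  by_contra hcon
  push_neg at hcon
  classical
  set T : Finset K := Finset.univ.image (algebraMap F K) with hT
  have hTcard : T.card = q := by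
    rw [hT, Finset.card_image_of_injective _ (algebraMap F K).injective, Finset.card_univ]
  have hq1 : 1 < q := Fintype.one_lt_card
  set g : Polynomial K := Polynomial.X ^ q - Polynomial.X with hg
  have hgne : g ≠ 0 := FiniteField.X_pow_card_sub_X_ne_zero K hq1
  have hdeg : g.natDegree = q := FiniteField.X_pow_card_sub_X_natDegree_eq K hq1
  have hroots : insert x T ⊆ g.roots.toFinset := by
    intro y hy
    rw [Multiset.mem_toFinset, Polynomial.mem_roots hgne]
    have hyq : y ^ q = y := by
      rcases Finset.mem_insert.mp hy with h | h
      · rw [h]; exact hxq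
      · obtain ⟨α, -, rfl⟩ := Finset.mem_image.mp h
        rw [← map_pow, FiniteField.pow_card]
    simp [hg, Polynomial.IsRoot, sub_eq_zero, hyq]
  have hxT : x ∉ T := by
    intro h
    obtain ⟨α, -, hα⟩ := Finset.mem_image.mp h
    exact hcon α hα
  have hcard2 : q + 1 ≤ g.roots.toFinset.card := by
    calc q + 1 = (insert x T).card := by rw [Finset.card_insert_of_notMem hxT, hTcard]
      _ ≤ _ := Finset.card_le_card hroots
  have : (g.roots.toFinset.card : ℕ) ≤ q := by
    calc g.roots.toFinset.card ≤ Multiset.card g.roots := g.roots.toFinset_card_le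
      _ ≤ g.natDegree := g.card_roots'
      _ = q := hdeg
  omega

end Ext

end TwistedGab

namespace TwistedGab

variable {F K : Type*} [Field F] [Fintype F] [Field K] [Algebra F K]

section Norm

variable [Fintype K] {n s : ℕ}

/-- geometric sum identity in ℕ -/
lemma geom_nat (q n : ℕ) (hq : 1 ≤ q) : (∑ i ∈ Finset.range n, q ^ i) * (q - 1) = q ^ n - 1 := by
  induction n with
  | zero => simp
  | succ n ih =>
    rw [Finset.sum_range_succ, add_mul, ih]
    have h1 : 1 ≤ q ^ n := Nat.one_le_pow _ _ hq
    have h2 : q ^ n ≤ q ^ (n+1) := Nat.pow_le_pow_right hq (Nat.le_succ n)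
    have h3 : q ^ (n+1) = q ^ n * q := pow_succ q n
    have h4 : q ^ n * (q - 1) = q ^ n * q - q ^ n := by
      rw [Nat.mul_sub, Nat.mul_one]
    omega

lemma e_eq (hn : 2 ≤ n) :
    (Fintype.card F ^ n - 1) / (Fintype.card F - 1) = ∑ i ∈ Finset.range n, Fintype.card F ^ i := by
  set q := Fintype.card F with hq
  have hq1 : 1 < q := Fintype.one_lt_card
  have := geom_nat q n (le_of_lt hq1)
  rw [← this, Nat.mul_div_cancel _ (by omega)]

lemma e_mul (hn : 2 ≤ n) :
    ((Fintype.card F ^ n - 1) / (Fintype.card F - 1)) * (Fintype.card F - 1)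
      = Fintype.card F ^ n - 1 := by
  rw [e_eq hn, geom_nat _ _ (le_of_lt Fintype.one_lt_card)]

lemma e_pos (hn : 2 ≤ n) : 0 < (Fintype.card F ^ n - 1) / (Fintype.card F - 1) := by
  have hq1 : 1 < Fintype.card F := Fintype.one_lt_card
  have hle : Fintype.card F ≤ Fintype.card F ^ n := Nat.le_self_pow (by omega) _
  exact (Nat.one_le_div_iff (by omega)).mpr (by omega)

/-- The norm of an element is fixed by raising to the `q`-th power. -/
lemma norm_fixed (hn : 2 ≤ n) (hcard : Fintype.card K = Fintype.card F ^ n) (u : K) :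
    (u ^ ((Fintype.card F ^ n - 1) / (Fintype.card F - 1))) ^ Fintype.card F
      = u ^ ((Fintype.card F ^ n - 1) / (Fintype.card F - 1)) := by
  set q := Fintype.card F with hq
  set e := (q ^ n - 1) / (q - 1) with he
  rcases eq_or_ne u 0 with rfl | hu
  · have hepos := e_pos (F := F) hn
    rw [← hq, ← he] at hepos
    rw [zero_pow (by omega), zero_pow (by have : 1 < q := Fintype.one_lt_card; omega)]
  · have h1 : e * q = e + (q ^ n - 1) := by
      have h2 := e_mul (F := F) hn
      rw [← hq, ← he] at h2
      have hq1 : 1 < q := Fintype.one_lt_card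
      have h3 : e * q = e * (q - 1) + e := by
        have h4 : e * q = e * ((q - 1) + 1) := by congr 1; omega
        rw [h4, Nat.mul_add, Nat.mul_one]
      omega
    rw [← pow_mul, h1, pow_add]
    have : u ^ (q ^ n - 1) = 1 := by
      rw [← hcard]; exact FiniteField.pow_card_sub_one_eq_one u hu
    rw [this, mul_one]

/-- Norm is invariant under Frobenius powers. -/
lemma norm_frob (hn : 2 ≤ n) (hcard : Fintype.card K = Fintype.card F ^ n) (u : K) (j : ℕ) :
    (u ^ Fintype.card F ^ j) ^ ((Fintype.card F ^ n - 1) / (Fintype.card F - 1))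
      = u ^ ((Fintype.card F ^ n - 1) / (Fintype.card F - 1)) := by
  rw [← pow_mul, mul_comm, pow_mul]
  exact pow_pow_iter (norm_fixed hn hcard u) j

/-- `(-1)^e = (-1)^n` in `K`. -/
lemma neg_one_pow_e (hn : 2 ≤ n) :
    (-1 : K) ^ ((Fintype.card F ^ n - 1) / (Fintype.card F - 1)) = (-1 : K) ^ n := by
  set q := Fintype.card F with hq
  set e := (q ^ n - 1) / (q - 1) with he
  rcases Nat.even_or_odd q with hqe | hqo
  · -- char 2
    have hchar : ringChar F = 2 := FiniteField.even_card_iff_char_two.mpr (Nat.even_iff.mp hqe)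
    haveI : CharP F 2 := by rw [← hchar]; exact ringChar.charP F
    haveI : CharP K 2 := charP_of_injective_algebraMap (algebraMap F K).injective 2
    have : (-1 : K) = 1 := by rw [CharTwo.neg_eq]
    rw [this, one_pow, one_pow]
  · -- q odd : e ≡ n [MOD 2]
    have hemod : e % 2 = n % 2 := by
      have hcast : ((e : ℕ) : ZMod 2) = ((n : ℕ) : ZMod 2) := by
        rw [he, e_eq hn, Nat.cast_sum]
        have hq2 : ((q : ℕ) : ZMod 2) = 1 := by
          have h5 : q % 2 = 1 := Nat.odd_iff.mp hqo
          rw [← ZMod.natCast_mod q 2, h5, Nat.cast_one]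
        calc (∑ i ∈ Finset.range n, ((q ^ i : ℕ) : ZMod 2))
            = ∑ i ∈ Finset.range n, 1 := by
              apply Finset.sum_congr rfl
              intro i _
              rw [Nat.cast_pow, hq2, one_pow]
          _ = (n : ZMod 2) := by simp
      have := (ZMod.natCast_eq_natCast_iff e n 2).mp hcast
      exact this
    rcases Nat.even_or_odd e with hee | heo
    · have hne : Even n := Nat.even_iff.mpr (by rw [← hemod]; exact Nat.even_iff.mp hee)
      rw [hee.neg_one_pow, hne.neg_one_pow]
    · have hno : Odd n := Nat.odd_iff.mpr (by rw [← hemod]; exact Nat.odd_iff.mp heo)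
      rw [heo.neg_one_pow, hno.neg_one_pow]

end Norm

end TwistedGab

namespace TwistedGab

variable {F K : Type*} [Field F] [Fintype F] [Field K] [Algebra F K]

lemma frob_sub (j : ℕ) (x y : K) :
    (x - y) ^ Fintype.card F ^ j = x ^ Fintype.card F ^ j - y ^ Fintype.card F ^ j := by
  have := frob_add (F := F) (K := K) j (x - y) y
  rw [sub_add_cancel] at this
  rw [this]
  ring

/-- Division step: if `u ≠ 0` is a root of the σ-polynomial with coefficients `d` and
degree `m+1`, then it factors through `x ↦ x^(q^s) - α x` with `α = u^(q^s)/u`. -/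
lemma step (s : ℕ) (d : ℕ → K) (m : ℕ) (u : K) (hu : u ≠ 0)
    (hfu : Pmap F s d (m + 1) u = 0) :
    ∃ ev : ℕ → K, ev m = d (m + 1) ∧
      d 0 = -(ev 0 * (u ^ Fintype.card F ^ s / u)) ∧
      ∀ x : K, Pmap F s d (m + 1) x =
        Pmap F s ev m (x ^ Fintype.card F ^ s - (u ^ Fintype.card F ^ s / u) * x) := by
  classical
  set α : K := u ^ Fintype.card F ^ s / u with hα
  let g : ℕ → K := fun j => Nat.rec (d (m + 1))
    (fun j gj => d (m - j) + gj * α ^ Fintype.card F ^ (s * (m - j))) j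
  set ev : ℕ → K := fun i => g (m - i) with hev_def
  have hevm : ev m = d (m + 1) := by simp [hev_def, g]
  have hrec : ∀ i, i < m → ev i = d (i + 1) + ev (i + 1) * α ^ Fintype.card F ^ (s * (i + 1)) := by
    intro i hi
    have h1 : m - i = (m - (i + 1)) + 1 := by omega
    have h2 : m - (m - (i + 1)) = i + 1 := by omega
    show g (m - i) = _
    rw [h1]
    show d (m - (m - (i+1))) + g (m - (i+1)) * α ^ Fintype.card F ^ (s * (m - (m - (i+1)))) = _
    rw [h2]
  have key : ∀ x : K, Pmap F s ev m (x ^ Fintype.card F ^ s - α * x)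
      = Pmap F s d (m + 1) x - (d 0 + ev 0 * α) * x := by
    intro x
    have hterm : ∀ i : ℕ, ev i * (x ^ Fintype.card F ^ s - α * x) ^ Fintype.card F ^ (s * i)
        = ev i * x ^ Fintype.card F ^ (s * (i + 1))
          - ev i * α ^ Fintype.card F ^ (s * i) * x ^ Fintype.card F ^ (s * i) := by
      intro i
      rw [frob_sub, mul_pow, ← pow_mul, ← pow_add]
      have h3 : s + s * i = s * (i + 1) := by ring
      rw [h3, mul_sub]
      ring
    rw [Pmap_apply]
    calc (∑ i ∈ Finset.range (m + 1),
            ev i * (x ^ Fintype.card F ^ s - α * x) ^ Fintype.card F ^ (s * i))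
        = ∑ i ∈ Finset.range (m + 1),
            (ev i * x ^ Fintype.card F ^ (s * (i + 1))
              - ev i * α ^ Fintype.card F ^ (s * i) * x ^ Fintype.card F ^ (s * i)) :=
          Finset.sum_congr rfl (fun i _ => hterm i)
      _ = (∑ i ∈ Finset.range (m + 1), ev i * x ^ Fintype.card F ^ (s * (i + 1)))
            - ∑ i ∈ Finset.range (m + 1),
                ev i * α ^ Fintype.card F ^ (s * i) * x ^ Fintype.card F ^ (s * i) :=
          Finset.sum_sub_distrib _ _
      _ = ((∑ i ∈ Finset.range m, ev i * x ^ Fintype.card F ^ (s * (i + 1)))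
              + ev m * x ^ Fintype.card F ^ (s * (m + 1)))
            - ((∑ i ∈ Finset.range m, ev (i + 1) * α ^ Fintype.card F ^ (s * (i + 1))
                  * x ^ Fintype.card F ^ (s * (i + 1)))
              + ev 0 * α ^ Fintype.card F ^ (s * 0) * x ^ Fintype.card F ^ (s * 0)) := by
          rw [Finset.sum_range_succ, Finset.sum_range_succ']
      _ = ((∑ i ∈ Finset.range m,
              (ev i * x ^ Fintype.card F ^ (s * (i + 1))
                - ev (i + 1) * α ^ Fintype.card F ^ (s * (i + 1))
                    * x ^ Fintype.card F ^ (s * (i + 1))))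
            + ev m * x ^ Fintype.card F ^ (s * (m + 1))) - ev 0 * α * x := by
          rw [Finset.sum_sub_distrib]
          simp only [Nat.mul_zero, pow_zero, pow_one]
          ring
      _ = ((∑ i ∈ Finset.range m, d (i + 1) * x ^ Fintype.card F ^ (s * (i + 1)))
            + d (m + 1) * x ^ Fintype.card F ^ (s * (m + 1))) - ev 0 * α * x := by
          rw [hevm]
          congr 2
          refine Finset.sum_congr rfl (fun i hi => ?_)
          rw [hrec i (Finset.mem_range.mp hi)]
          ring
      _ = Pmap F s d (m + 1) x - (d 0 + ev 0 * α) * x := by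
          rw [Pmap_apply, Finset.sum_range_succ', Finset.sum_range_succ]
          simp only [Nat.mul_zero, pow_zero, pow_one]
          ring
  have hu0 : Pmap F s ev m (u ^ Fintype.card F ^ s - α * u) = 0 := by
    have h4 : u ^ Fintype.card F ^ s - α * u = 0 := by
      rw [hα, div_mul_cancel₀ _ hu, sub_self]
    rw [h4, map_zero]
  have hconst : d 0 = -(ev 0 * α) := by
    have h := key u
    rw [hu0, hfu, zero_sub, eq_comm, neg_eq_zero, mul_eq_zero] at h
    rcases h with h | h
    · linear_combination h
    · exact absurd h hu
  refine ⟨ev, hevm, hconst, fun x => ?_⟩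
  rw [key x, hconst]
  ring

end TwistedGab

namespace TwistedGab

variable {F K : Type*} [Field F] [Fintype F] [Field K] [Algebra F K]

open Module LinearMap

/-- Generic bound: the kernel of a composition has dimension at most the sum. -/
lemma finrank_ker_comp_le [FiniteDimensional F K] (g L : K →ₗ[F] K) :
    finrank F (ker (g.comp L)) ≤ finrank F (ker g) + finrank F (ker L) := by
  classical
  set C := ker (g.comp L) with hC
  set L' := L.domRestrict C with hL'
  have hrange : range L' ≤ ker g := by
    rintro y ⟨⟨x, hx⟩, rfl⟩
    have hx' : g (L x) = 0 := hx
    simpa [hL', LinearMap.mem_ker] using hx'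
  have hmem : ∀ x : ker L', ((x : C) : K) ∈ ker L := by
    rintro ⟨⟨x, hx⟩, hx2⟩
    simpa [hL', LinearMap.mem_ker] using hx2
  let ψ : ker L' →ₗ[F] ker L :=
    LinearMap.codRestrict (ker L) ((C.subtype).comp (ker L').subtype) hmem
  have hψ : Function.Injective ψ := by
    intro a b hab
    have h0 : (ψ a : K) = (ψ b : K) := congrArg Subtype.val hab
    have : ((a : C) : K) = ((b : C) : K) := h0
    exact Subtype.ext (Subtype.ext this)
  have h1 : finrank F C = finrank F (range L') + finrank F (ker L') :=
    (LinearMap.finrank_range_add_finrank_ker L').symm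
  have h2 : finrank F (range L') ≤ finrank F (ker g) := Submodule.finrank_mono hrange
  have h3 : finrank F (ker L') ≤ finrank F (ker L) :=
    LinearMap.finrank_le_finrank_of_injective hψ
  omega

end TwistedGab

namespace TwistedGab

variable {F K : Type*} [Field F] [Fintype F] [Field K] [Algebra F K]

open Module LinearMap

section Core

variable [Fintype K] [FiniteDimensional F K] {n s : ℕ}

/-- The linear factor `x ↦ x^(q^s) - α x`. -/
def Lmap (F : Type*) [Field F] [Fintype F] {K : Type*} [Field K] [Algebra F K]
    (s : ℕ) (α : K) : K →ₗ[F] K :=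
  tau F s - LinearMap.mul F K α

@[simp] lemma Lmap_apply (s : ℕ) (α : K) (x : K) :
    Lmap F s α x = x ^ Fintype.card F ^ s - α * x := by
  simp [Lmap, LinearMap.sub_apply, LinearMap.mul_apply']

lemma finrank_ker_Lmap (hn : 2 ≤ n) (hs : Nat.Coprime s n)
    (hcard : Fintype.card K = Fintype.card F ^ n)
    {u : K} (hu : u ≠ 0) :
    finrank F (ker (Lmap F s (u ^ Fintype.card F ^ s / u))) ≤ 1 := by
  set α : K := u ^ Fintype.card F ^ s / u with hα
  have hspan : ker (Lmap F s α) ≤ Submodule.span F {u} := by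
    intro x hx
    rw [LinearMap.mem_ker, Lmap_apply, sub_eq_zero] at hx
    rcases eq_or_ne x 0 with rfl | hx0
    · exact Submodule.zero_mem _
    · have hup : u ^ Fintype.card F ^ s = α * u := by
        rw [hα, div_mul_cancel₀ _ hu]
      have hy : (x / u) ^ Fintype.card F ^ s = x / u := by
        rw [div_pow, hx, hup, mul_div_mul_left _ _ ?_]
        rw [hα]
        exact div_ne_zero (pow_ne_zero _ hu) hu
      obtain ⟨β, hβ⟩ := fixed_mem hn hs hcard hy
      rw [Submodule.mem_span_singleton]
      exact ⟨β, by rw [Algebra.smul_def, hβ, div_mul_cancel₀ _ hu]⟩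
  calc finrank F (ker (Lmap F s α)) ≤ finrank F (Submodule.span F {u}) :=
        Submodule.finrank_mono hspan
    _ = 1 := finrank_span_singleton hu

/-- Kernel bound: a nonzero σ-polynomial of σ-degree `m` has kernel of dimension at most `m`. -/
lemma finrank_ker_Pmap_le (hn : 2 ≤ n) (hs : Nat.Coprime s n)
    (hcard : Fintype.card K = Fintype.card F ^ n) :
    ∀ (m : ℕ) (d : ℕ → K), d m ≠ 0 → finrank F (ker (Pmap F s d m)) ≤ m := by
  intro m
  induction m with
  | zero =>
    intro d hd
    have hker : ker (Pmap F s d 0) = ⊥ := by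
      rw [LinearMap.ker_eq_bot']
      intro x hx
      rw [Pmap_apply, Finset.sum_range_one, Nat.mul_zero, pow_zero, pow_one] at hx
      exact (mul_eq_zero.mp hx).resolve_left hd
    rw [hker, finrank_bot]
  | succ m ih =>
    intro d hd
    rcases eq_or_ne (ker (Pmap F s d (m + 1))) ⊥ with hker | hker
    · rw [hker, finrank_bot]; omega
    · obtain ⟨u, hu_mem, hu⟩ := Submodule.ne_bot_iff _ |>.mp hker
      obtain ⟨ev, hevm, -, hfact⟩ := step s d m u hu hu_mem
      set α : K := u ^ Fintype.card F ^ s / u with hα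
      have hcomp : Pmap F s d (m + 1) = (Pmap F s ev m).comp (Lmap F s α) := by
        ext x
        rw [LinearMap.comp_apply, hfact x, Lmap_apply]
      have h1 := finrank_ker_comp_le (Pmap F s ev m) (Lmap F s α)
      have h2 : finrank F (ker (Lmap F s α)) ≤ 1 := finrank_ker_Lmap hn hs hcard hu
      have h3 : finrank F (ker (Pmap F s ev m)) ≤ m := ih ev (by rw [hevm]; exact hd)
      rw [hcomp]
      omega

/-- The norm relation: if the kernel has dimension at least `m`, then
`N(d 0) = (-1)^(nm) N(d m)`. -/
lemma norm_relation (hn : 2 ≤ n) (hs : Nat.Coprime s n)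
    (hcard : Fintype.card K = Fintype.card F ^ n) :
    ∀ (m : ℕ) (d : ℕ → K), m ≤ finrank F (ker (Pmap F s d m)) →
      d 0 ^ ((Fintype.card F ^ n - 1) / (Fintype.card F - 1))
        = (-1 : K) ^ (n * m) * d m ^ ((Fintype.card F ^ n - 1) / (Fintype.card F - 1)) := by
  intro m
  induction m with
  | zero => intro d _; rw [Nat.mul_zero, pow_zero, one_mul]
  | succ m ih =>
    intro d hdim
    set e := (Fintype.card F ^ n - 1) / (Fintype.card F - 1) with he
    have hker : ker (Pmap F s d (m + 1)) ≠ ⊥ := by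
      intro hbot
      rw [hbot, finrank_bot] at hdim
      omega
    obtain ⟨u, hu_mem, hu⟩ := Submodule.ne_bot_iff _ |>.mp hker
    obtain ⟨ev, hevm, hconst, hfact⟩ := step s d m u hu hu_mem
    set α : K := u ^ Fintype.card F ^ s / u with hα
    have hcomp : Pmap F s d (m + 1) = (Pmap F s ev m).comp (Lmap F s α) := by
      ext x
      rw [LinearMap.comp_apply, hfact x, Lmap_apply]
    have h1 := finrank_ker_comp_le (Pmap F s ev m) (Lmap F s α)
    have h2 : finrank F (ker (Lmap F s α)) ≤ 1 := finrank_ker_Lmap hn hs hcard hu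
    rw [← hcomp] at h1
    have h3 : m ≤ finrank F (ker (Pmap F s ev m)) := by omega
    have hIH := ih ev h3
    have hαe : α ^ e = 1 := by
      rw [hα, div_pow, norm_frob hn hcard u s, div_self (pow_ne_zero _ hu)]
    have hneg : (-1 : K) ^ e = (-1 : K) ^ n := neg_one_pow_e hn
    calc d 0 ^ e = (-(ev 0 * α)) ^ e := by rw [hconst]
      _ = (-1 : K) ^ e * (ev 0 ^ e * α ^ e) := by rw [neg_pow, mul_pow]
      _ = (-1 : K) ^ n * ev 0 ^ e := by rw [hαe, mul_one, hneg]
      _ = (-1 : K) ^ n * ((-1 : K) ^ (n * m) * ev m ^ e) := by rw [hIH]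
      _ = (-1 : K) ^ (n * (m + 1)) * d (m + 1) ^ e := by
          rw [hevm, ← mul_assoc, ← pow_add]
          congr 2
          ring

end Core

end TwistedGab

namespace TwistedGab

variable {F K : Type*} [Field F] [Fintype F] [Field K] [Algebra F K]

open Module LinearMap

lemma Pmap_eq_zero (s : ℕ) (d : ℕ → K) (m : ℕ) (hd : ∀ i ≤ m, d i = 0) :
    Pmap F s d m = 0 := by
  ext x
  rw [Pmap_apply]
  simp only [LinearMap.zero_apply]
  refine Finset.sum_eq_zero (fun i hi => ?_)
  rw [hd i (by simp at hi; omega), zero_mul]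

lemma Pmap_congr_trunc (s : ℕ) (d : ℕ → K) {m k : ℕ} (hmk : m ≤ k)
    (hd : ∀ i, m < i → i ≤ k → d i = 0) : Pmap F s d k = Pmap F s d m := by
  ext x
  rw [Pmap_apply, Pmap_apply]
  symm
  refine Finset.sum_subset (Finset.range_subset_range.mpr (by omega)) (fun i hik him => ?_)
  rw [hd i (by simp at him; omega) (by simp at hik; omega), zero_mul]

section Core2

variable [Fintype K] [FiniteDimensional F K] {n s : ℕ}

lemma Pmap_coeff_zero (hn : 2 ≤ n) (hs : Nat.Coprime s n)
    (hcard : Fintype.card K = Fintype.card F ^ n) (hfr : finrank F K = n)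
    {m : ℕ} (hm : m ≤ n - 1) (d : ℕ → K) (hP : Pmap F s d m = 0) :
    ∀ i ≤ m, d i = 0 := by
  classical
  by_contra hcon
  push_neg at hcon
  obtain ⟨i, hik, hi⟩ := hcon
  set P : ℕ → Prop := fun j => d j ≠ 0 with hPdef
  set m' := Nat.findGreatest P m with hm'
  have hm'le : m' ≤ m := Nat.findGreatest_le m
  have hm'spec : d m' ≠ 0 := Nat.findGreatest_spec (P := P) hik hi
  have htrunc : Pmap F s d m = Pmap F s d m' :=
    Pmap_congr_trunc s d hm'le (fun j hj1 hj2 => by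
      by_contra hne
      exact Nat.findGreatest_is_greatest hj1 hj2 hne)
  have hb := finrank_ker_Pmap_le (n := n) hn hs hcard m' d hm'spec
  rw [← htrunc, hP] at hb
  have : ker (0 : K →ₗ[F] K) = ⊤ := LinearMap.ker_zero
  rw [this, finrank_top, hfr] at hb
  omega

end Core2

/-- coefficient function for the parametrization -/
def dcoef (φ₁ φ₂ : K →+ K) {k : ℕ} (hk : 0 < k) (v : Fin k → K) : ℕ → K := fun i =>
  if i = 0 then φ₁ (v ⟨0, hk⟩)
  else if hi : i < k then v ⟨i, hi⟩
  else if i = k then φ₂ (v ⟨0, hk⟩) else 0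

lemma dcoef_zero (φ₁ φ₂ : K →+ K) {k : ℕ} (hk : 0 < k) (v : Fin k → K) :
    dcoef φ₁ φ₂ hk v 0 = φ₁ (v ⟨0, hk⟩) := by simp [dcoef]

lemma dcoef_top (φ₁ φ₂ : K →+ K) {k : ℕ} (hk : 0 < k) (v : Fin k → K) :
    dcoef φ₁ φ₂ hk v k = φ₂ (v ⟨0, hk⟩) := by
  unfold dcoef
  rw [if_neg (by omega), dif_neg (by omega), if_pos rfl]

lemma dcoef_mid (φ₁ φ₂ : K →+ K) {k : ℕ} (hk : 0 < k) (v : Fin k → K)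
    {i : ℕ} (h1 : 1 ≤ i) (h2 : i < k) :
    dcoef φ₁ φ₂ hk v i = v ⟨i, h2⟩ := by
  unfold dcoef
  rw [if_neg (by omega), dif_pos h2]

lemma dcoef_add (φ₁ φ₂ : K →+ K) {k : ℕ} (hk : 0 < k) (v w : Fin k → K) (i : ℕ) :
    dcoef φ₁ φ₂ hk (v + w) i = dcoef φ₁ φ₂ hk v i + dcoef φ₁ φ₂ hk w i := by
  unfold dcoef
  by_cases h0 : i = 0
  · simp [h0]
  · by_cases hik : i < k
    · simp [h0, hik]
    · have hk0 : ¬ (k = 0) := by omega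
      by_cases hk' : i = k <;> simp [h0, hik, hk', hk0]

lemma Pmap_dcoef_apply (s : ℕ) (φ₁ φ₂ : K →+ K) {k : ℕ} (hk : 0 < k) (v : Fin k → K) (x : K) :
    Pmap F s (dcoef φ₁ φ₂ hk v) k x
      = φ₁ (v ⟨0, hk⟩) * x
        + (∑ i ∈ Finset.Ico 1 k, dcoef φ₁ φ₂ hk v i * x ^ Fintype.card F ^ (s * i))
        + φ₂ (v ⟨0, hk⟩) * x ^ Fintype.card F ^ (s * k) := by
  rw [Pmap_apply, Finset.sum_range_succ, dcoef_top]
  congr 1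
  rw [Finset.range_eq_Ico, Finset.sum_eq_sum_Ico_succ_bot hk, dcoef_zero,
    Nat.mul_zero, pow_zero, pow_one]

end TwistedGab


open TwistedGab Module LinearMap

/-- The general construction `H_k(φ₁, φ₂)`: if
`N(φ₁(a)) ≠ (-1)^(nk) N(φ₂(a))` for all nonzero `a`, then the set of linearized maps
`x ↦ φ₁(a)x + Σ_{i=1}^{k-1} f_i x^(q^(si)) + φ₂(a) x^(q^(sk))` is an additive MRD code
of cardinality `q^(nk)` and minimum distance `n - k + 1`. -/
theorem twisted_gabidulin_construction (F : Type*) [Field F] [Fintype F]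
    (K : Type*) [Field K] [Algebra F K]
    (n : ℕ) (hn : 2 ≤ n) (hK : Module.finrank F K = n)
    (s : ℕ) (hs : Nat.Coprime s n)
    (φ₁ φ₂ : K →+ K)
    (k : ℕ) (hk1 : 1 ≤ k) (hkn : k ≤ n - 1)
    (hnorm : ∀ a : K, a ≠ 0 →
      (φ₁ a) ^ ((Fintype.card F ^ n - 1) / (Fintype.card F - 1)) ≠
        (-1 : K) ^ (n * k) * (φ₂ a) ^ ((Fintype.card F ^ n - 1) / (Fintype.card F - 1))) :
    ∃ H : AddSubgroup (K →ₗ[F] K),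
      (H : Set (K →ₗ[F] K)) =
        {f : K →ₗ[F] K | ∃ (a : K) (c : ℕ → K), ∀ x : K,
          f x = φ₁ a * x + (∑ i ∈ Finset.Ico 1 k, c i * x ^ (Fintype.card F ^ (s * i)))
            + φ₂ a * x ^ (Fintype.card F ^ (s * k))} ∧
      Nat.card H = Fintype.card F ^ (n * k) ∧
      ∀ f ∈ H, f ≠ 0 → n - k + 1 ≤ Module.finrank F (LinearMap.range f) := by
  classical
  have hk0 : 0 < k := hk1
  haveI : Module.Finite F K := Module.finite_of_finrank_pos (by rw [hK]; omega)
  haveI : Finite K := Module.finite_of_finite F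
  haveI : Fintype K := Fintype.ofFinite K
  have hcard : Fintype.card K = Fintype.card F ^ n := by
    rw [card_eq_pow_finrank (K := F) (V := K), hK]
  -- the additive parametrization
  let Ψ : (Fin k → K) →+ (K →ₗ[F] K) := AddMonoidHom.mk'
    (fun v => Pmap F s (dcoef φ₁ φ₂ hk0 v) k)
    (by
      intro v w
      ext x
      show Pmap F s (dcoef φ₁ φ₂ hk0 (v + w)) k x
        = Pmap F s (dcoef φ₁ φ₂ hk0 v) k x + Pmap F s (dcoef φ₁ φ₂ hk0 w) k x
      rw [Pmap_apply, Pmap_apply, Pmap_apply, ← Finset.sum_add_distrib]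
      exact Finset.sum_congr rfl (fun i _ => by rw [dcoef_add, add_mul]))
  have hΨapp : ∀ v, Ψ v = Pmap F s (dcoef φ₁ φ₂ hk0 v) k := fun v => rfl
  -- injectivity
  have hΨinj : Function.Injective Ψ := by
    rw [injective_iff_map_eq_zero]
    intro v hv
    rw [hΨapp] at hv
    have hvz : ∀ i ≤ k, dcoef φ₁ φ₂ hk0 v i = 0 :=
      Pmap_coeff_zero hn hs hcard hK hkn _ hv
    have hv0 : v ⟨0, hk0⟩ = 0 := by
      by_contra hne
      have h1 := hnorm _ hne
      have h2 : φ₁ (v ⟨0, hk0⟩) = 0 := by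
        rw [← dcoef_zero φ₁ φ₂ hk0 v]; exact hvz 0 (by omega)
      have h3 : φ₂ (v ⟨0, hk0⟩) = 0 := by
        rw [← dcoef_top φ₁ φ₂ hk0 v]; exact hvz k le_rfl
      have hepos := e_pos (F := F) hn
      rw [h2, h3, zero_pow (by omega), mul_zero] at h1
      exact h1 rfl
    funext j
    show v j = 0
    rcases eq_or_ne j ⟨0, hk0⟩ with rfl | hj
    · exact hv0
    · have hj1 : 1 ≤ (j : ℕ) := by
        rcases Nat.eq_zero_or_pos (j : ℕ) with h | h
        · exact absurd (Fin.ext h) hj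
        · omega
      have hjz := hvz (j : ℕ) (le_of_lt (lt_of_lt_of_le j.isLt (by omega)))
      rw [dcoef_mid φ₁ φ₂ hk0 v hj1 j.isLt] at hjz
      simpa using hjz
  refine ⟨Ψ.range, ?_, ?_, ?_⟩
  · -- set equality
    ext f
    simp only [AddMonoidHom.coe_range, Set.mem_range, Set.mem_setOf_eq]
    constructor
    · rintro ⟨v, rfl⟩
      exact ⟨v ⟨0, hk0⟩, fun i => dcoef φ₁ φ₂ hk0 v i, fun x => by
        rw [hΨapp]; exact Pmap_dcoef_apply s φ₁ φ₂ hk0 v x⟩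
    · rintro ⟨a, c, hf⟩
      refine ⟨fun j => if (j : ℕ) = 0 then a else c (j : ℕ), ?_⟩
      have hva : (if ((⟨0, hk0⟩ : Fin k) : ℕ) = 0 then a else c ((⟨0, hk0⟩ : Fin k) : ℕ)) = a :=
        if_pos rfl
      ext x
      rw [hΨapp, Pmap_dcoef_apply, hf x, hva]
      congr 1
      congr 1
      refine Finset.sum_congr rfl (fun i hi => ?_)
      obtain ⟨hi1, hi2⟩ := Finset.mem_Ico.mp hi
      rw [dcoef_mid φ₁ φ₂ hk0 _ hi1 hi2]
      simp [show ¬((i : ℕ) = 0) by omega]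
  · -- cardinality
    have h1 : Nat.card Ψ.range = Nat.card (Set.range Ψ) :=
      Nat.card_congr (Equiv.subtypeEquivRight (fun x => by
        simp [AddMonoidHom.mem_range, Set.mem_range, eq_comm]))
    have h2 : Nat.card (Set.range Ψ) = Nat.card (Fin k → K) :=
      Nat.card_congr (Equiv.ofInjective Ψ hΨinj).symm
    rw [h1, h2, Nat.card_fun, Nat.card_eq_fintype_card,
      Nat.card_eq_fintype_card, Fintype.card_fin, hcard, ← pow_mul]
  · -- rank bound
    intro f hf hfne
    obtain ⟨v, rfl⟩ := AddMonoidHom.mem_range.mp hf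
    set d : ℕ → K := dcoef φ₁ φ₂ hk0 v with hd
    have hfeq : Ψ v = Pmap F s d k := rfl
    have hrn := LinearMap.finrank_range_add_finrank_ker (Ψ v)
    rw [hK] at hrn
    suffices hker : Module.finrank F (LinearMap.ker (Ψ v)) ≤ k - 1 by omega
    rw [hfeq]
    by_cases hdk : d k = 0
    · -- top coefficient vanishes
      have hwit : ∃ i ≤ k, d i ≠ 0 := by
        by_contra hc
        push_neg at hc
        exact hfne (by rw [hfeq]; exact Pmap_eq_zero s d k hc)
      obtain ⟨i, hik, hi⟩ := hwit
      set m' := Nat.findGreatest (fun j => d j ≠ 0) k with hm'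
      have hm'le : m' ≤ k := Nat.findGreatest_le k
      have hm'spec : d m' ≠ 0 := Nat.findGreatest_spec (P := fun j => d j ≠ 0) hik hi
      have hm'lt : m' ≤ k - 1 := by
        rcases eq_or_ne m' k with h | h
        · rw [h] at hm'spec; exact absurd hdk hm'spec
        · omega
      have htr : Pmap F s d k = Pmap F s d m' :=
        Pmap_congr_trunc s d hm'le (fun j h1 h2 => by
          by_contra hne
          exact Nat.findGreatest_is_greatest h1 h2 hne)
      rw [htr]
      exact le_trans (finrank_ker_Pmap_le hn hs hcard m' d hm'spec) hm'lt
    · have ha : v ⟨0, hk0⟩ ≠ 0 := fun h => hdk (by rw [hd, dcoef_top, h, map_zero])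
      by_cases hd0 : d 0 = 0
      · -- bottom coefficient vanishes : shift down
        set dt : ℕ → K := fun i => d (i + 1) ^ Fintype.card F ^ (s * (n - 1)) with hdt
        have hpow : ∀ y : K, (y ^ Fintype.card F ^ (s * (n - 1))) ^ Fintype.card F ^ s = y := by
          intro y
          rw [← pow_mul, ← pow_add]
          have harith : s * (n - 1) + s = n * s := by
            have : n - 1 + 1 = n := by omega
            calc s * (n - 1) + s = s * ((n - 1) + 1) := by ring
              _ = n * s := by rw [this]; ring
          rw [harith, pow_mul]
          have hyn : y ^ Fintype.card F ^ n = y := by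
            rw [← hcard]; exact FiniteField.pow_card y
          exact pow_pow_iter hyn s
        have hshift : ∀ x : K, Pmap F s d k x
            = (Pmap F s dt (k - 1) x) ^ Fintype.card F ^ s := by
          intro x
          have hk' : k - 1 + 1 = k := by omega
          have h2 : (Pmap F s dt (k - 1) x) ^ Fintype.card F ^ s
              = ∑ i ∈ Finset.range k, tau F s (dt i * x ^ Fintype.card F ^ (s * i)) := by
            rw [show (Pmap F s dt (k - 1) x) ^ Fintype.card F ^ s
                = tau F s (Pmap F s dt (k - 1) x) from rfl, Pmap_apply, hk', map_sum]
          rw [h2, Pmap_apply, Finset.sum_range_succ', hd0, zero_mul, add_zero]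
          refine Finset.sum_congr rfl (fun i _ => ?_)
          rw [tau_apply, mul_pow,
            show dt i = d (i + 1) ^ Fintype.card F ^ (s * (n - 1)) from rfl,
            hpow (d (i + 1)), ← pow_mul, ← pow_add]
          have harith2 : s * i + s = s * (i + 1) := by ring
          rw [harith2]
        have hker_eq : LinearMap.ker (Pmap F s d k) = LinearMap.ker (Pmap F s dt (k - 1)) := by
          ext x
          simp only [LinearMap.mem_ker]
          rw [hshift x]
          constructor
          · intro h
            exact pow_eq_zero_iff (pow_ne_zero s (by positivity)) |>.mp h
          · intro h
            rw [h, zero_pow (pow_ne_zero s (by positivity))]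
        rw [hker_eq]
        have hdtne : dt (k - 1) ≠ 0 := by
          rw [hdt]
          have hk' : k - 1 + 1 = k := by omega
          simp only []
          rw [hk']
          exact pow_ne_zero _ hdk
        exact le_trans (finrank_ker_Pmap_le hn hs hcard (k - 1) dt hdtne) le_rfl
      · -- both end coefficients nonzero : use the norm relation
        by_contra hcon
        push_neg at hcon
        have hge : k ≤ Module.finrank F (LinearMap.ker (Pmap F s d k)) := by omega
        have hrel := norm_relation hn hs hcard k d hge
        rw [hd, dcoef_zero, dcoef_top] at hrel
        exact hnorm _ ha hrel
end

section
/- Let q be a prime power and let 1 ≤ d ≤ n. The set D = { x ↦ Σ_{i=0}^{n−d} f_i·x^(q^i) : f₀, …, f_{n−d} ∈ F_{q^n} } of F_q-linear endomorphisms of F_{q^n} is an additive subgroup of cardinality q^(n(n−d+1)) in which every nonzero element has rank at least d. In particular, additive MRD codes in M_n(F_q) with minimum distance d exist for all prime powers q and all 1 ≤ d ≤ n. -/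
open Polynomial Finset

section Gab

variable {F : Type*} [Field F] [Fintype F] {K : Type*} [Field K] [Algebra F K]

private lemma gab_pow_add (x y : K) (i : ℕ) :
    (x + y) ^ (Fintype.card F ^ i) =
      x ^ (Fintype.card F ^ i) + y ^ (Fintype.card F ^ i) := by
  obtain ⟨p, hchar⟩ := CharP.exists F
  haveI := hchar
  obtain ⟨k, hpp, hcard⟩ := FiniteField.card F p
  haveI : Fact p.Prime := ⟨hpp⟩
  haveI : CharP K p := charP_of_injective_algebraMap (algebraMap F K).injective p
  rw [hcard, ← pow_mul]
  exact add_pow_char_pow ..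

private lemma gab_pow_smul (a : F) (x : K) (i : ℕ) :
    (a • x) ^ (Fintype.card F ^ i) = a • x ^ (Fintype.card F ^ i) := by
  rw [Algebra.smul_def, Algebra.smul_def, mul_pow, ← map_pow, FiniteField.pow_card_pow]

/-- The linearized polynomial map with coefficients `c`. -/
private def gabMap (m : ℕ) (c : Fin m → K) : K →ₗ[F] K where
  toFun x := ∑ i : Fin m, c i * x ^ (Fintype.card F ^ (i : ℕ))
  map_add' x y := by
    simp only [gab_pow_add, mul_add, Finset.sum_add_distrib]
  map_smul' a x := by
    simp only [gab_pow_smul, RingHom.id_apply, Finset.smul_sum, mul_smul_comm]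

private def gabHom (m : ℕ) : (Fin m → K) →+ (K →ₗ[F] K) where
  toFun := gabMap m
  map_zero' := by ext x; simp [gabMap]
  map_add' c c' := by
    ext x
    simp [gabMap, add_mul, Finset.sum_add_distrib]

private lemma gabMap_apply (m : ℕ) (c : Fin m → K) (x : K) :
    gabMap (F := F) m c x = ∑ i : Fin m, c i * x ^ (Fintype.card F ^ (i : ℕ)) := rfl

end Gab

/-- **Delsarte–Gabidulin.** The set of linearized polynomial maps
`x ↦ Σ_{i=0}^{n-d} f_i x^(q^i)` is an additive subgroup of `End_{F_q}(F_{q^n})` of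
cardinality `q^(n(n-d+1))` all of whose nonzero elements have rank at least `d`; in
particular additive MRD codes of minimum distance `d` exist for all `q` and `1 ≤ d ≤ n`. -/
theorem delsarte_gabidulin_is_MRD (F : Type*) [Field F] [Fintype F]
    (K : Type*) [Field K] [Algebra F K]
    (n d : ℕ) (hK : Module.finrank F K = n) (hd1 : 1 ≤ d) (hdn : d ≤ n) :
    ∃ H : AddSubgroup (K →ₗ[F] K),
      (H : Set (K →ₗ[F] K)) =
        {f : K →ₗ[F] K | ∃ c : ℕ → K, ∀ x : K,
          f x = ∑ i ∈ Finset.range (n - d + 1), c i * x ^ (Fintype.card F ^ i)} ∧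
      Nat.card H = Fintype.card F ^ (n * (n - d + 1)) ∧
      ∀ f ∈ H, f ≠ 0 → d ≤ Module.finrank F (LinearMap.range f) := by
  classical
  set q := Fintype.card F with hq
  have hq2 : 2 ≤ q := Fintype.one_lt_card
  set m := n - d + 1 with hm
  haveI : FiniteDimensional F K := .of_finrank_pos (by omega)
  haveI : Finite K := Module.finite_of_finite F
  haveI : Fintype K := Fintype.ofFinite K
  have hcardK : Fintype.card K = q ^ n := by rw [Module.card_eq_pow_finrank (K := F), hK]
  -- the polynomial attached to coefficients
  have key : ∀ c : ℕ → K, ∃ P : K[X],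
      (∀ x : K, P.eval x = ∑ i ∈ Finset.range m, c i * x ^ (q ^ i)) ∧
      P.natDegree ≤ q ^ (n - d) ∧
      (∀ j < m, P.coeff (q ^ j) = c j) := by
    intro c
    refine ⟨∑ i ∈ Finset.range m, C (c i) * X ^ (q ^ i), ?_, ?_, ?_⟩
    · intro x; simp [eval_finset_sum]
    · refine Polynomial.natDegree_sum_le_of_forall_le _ _ fun i hi => ?_
      calc (C (c i) * X ^ (q ^ i)).natDegree ≤ (X ^ (q ^ i) : K[X]).natDegree :=
            natDegree_C_mul_le _ _
        _ ≤ q ^ (n - d) := by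
            rw [natDegree_X_pow]
            exact Nat.pow_le_pow_right (by omega) (by simp [hm] at hi; omega)
    · intro j hj
      rw [finset_sum_coeff]
      rw [Finset.sum_eq_single j]
      · simp
      · intro i _ hij
        have h2 : q ^ j ≠ q ^ i := fun h => hij (Nat.pow_right_injective hq2 h).symm
        simp [coeff_X_pow, h2]
      · intro h; exact absurd (Finset.mem_range.mpr hj) h
  -- injectivity of gabHom
  have hinj : Function.Injective (gabHom (F := F) (K := K) m) := by
    rw [injective_iff_map_eq_zero]
    intro c hc
    set c' : ℕ → K := fun i => if h : i < m then c ⟨i, h⟩ else 0 with hc'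
    obtain ⟨P, hev, hdeg, hcoeff⟩ := key c'
    have hev0 : ∀ x : K, P.eval x = 0 := by
      intro x
      rw [hev x]
      have := congrArg (fun g : K →ₗ[F] K => g x) hc
      simp only [LinearMap.zero_apply] at this
      rw [← this]
      show _ = gabMap m c x
      rw [gabMap_apply, Finset.sum_range fun i => c' i * x ^ (q ^ i)]
      refine Finset.sum_congr rfl fun i _ => ?_
      simp [hc', i.isLt, hq]
    have hP0 : P = 0 := by
      by_contra hP
      have hsub : (Finset.univ : Finset K) ⊆ P.roots.toFinset := by
        intro x _
        rw [Multiset.mem_toFinset, mem_roots hP]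
        exact hev0 x
      have h1 : Fintype.card K ≤ P.natDegree :=
        le_trans (Finset.card_le_card hsub)
          (le_trans (Multiset.toFinset_card_le _) (P.card_roots' ))
      have h2 : q ^ (n - d) < q ^ n := Nat.pow_lt_pow_right (by omega) (by omega)
      omega
    funext j
    have := hcoeff j j.isLt
    rw [hP0] at this
    simp only [coeff_zero] at this
    have : c' (j : ℕ) = 0 := this.symm
    simpa [hc', j.isLt] using this
  refine ⟨(gabHom (F := F) (K := K) m).range, ?_, ?_, ?_⟩
  · ext f
    simp only [AddMonoidHom.coe_range, Set.mem_range, Set.mem_setOf_eq]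
    constructor
    · rintro ⟨c, rfl⟩
      refine ⟨fun i => if h : i < m then c ⟨i, h⟩ else 0, fun x => ?_⟩
      show gabMap m c x = _
      rw [gabMap_apply, Finset.sum_range fun i =>
        (if h : i < m then c ⟨i, h⟩ else 0) * x ^ (q ^ i)]
      exact Finset.sum_congr rfl fun i _ => by simp [i.isLt, hq]
    · rintro ⟨c, hcf⟩
      refine ⟨fun j => c j, ?_⟩
      apply LinearMap.ext
      intro x
      show gabMap m _ x = f x
      rw [gabMap_apply, hcf x, Finset.sum_range fun i => c i * x ^ (q ^ i)]
  · have h1 : Nat.card (gabHom (F := F) (K := K) m).range = Nat.card (Fin m → K) := by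
      have h2 : Nat.card (Set.range (gabHom (F := F) (K := K) m)) = Nat.card (Fin m → K) :=
        Nat.card_range_of_injective hinj
      exact h2
    rw [h1, Nat.card_eq_fintype_card, Fintype.card_fun, hcardK]
    simp [Fintype.card_fin, ← pow_mul]
  · intro f hf hf0
    obtain ⟨c, rfl⟩ := hf
    set c' : ℕ → K := fun i => if h : i < m then c ⟨i, h⟩ else 0 with hc'
    obtain ⟨P, hev, hdeg, -⟩ := key c'
    have hev' : ∀ x : K, P.eval x = gabMap (F := F) m c x := by
      intro x
      rw [hev x, gabMap_apply, Finset.sum_range fun i => c' i * x ^ (q ^ i)]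
      exact Finset.sum_congr rfl fun i _ => by simp [hc', i.isLt, hq]
    have hP : P ≠ 0 := by
      intro h
      apply hf0
      apply LinearMap.ext
      intro x
      have := hev' x
      rw [h] at this
      have h2 : (gabHom (F := F) (K := K) m c) x = eval x 0 := this.symm; simpa using h2
    -- kernel is contained in the roots
    have hsub : (LinearMap.ker (gabMap (F := F) m c) : Set K) ⊆ ↑P.roots.toFinset := by
      intro x hx
      rw [SetLike.mem_coe, LinearMap.mem_ker] at hx
      simp only [Finset.mem_coe, Multiset.mem_toFinset, mem_roots hP, IsRoot]
      rw [hev' x, hx]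
    have hcard : Nat.card (LinearMap.ker (gabMap (F := F) m c)) ≤ q ^ (n - d) := by
      calc Nat.card (LinearMap.ker (gabMap (F := F) m c))
          ≤ Nat.card (↑P.roots.toFinset : Set K) :=
            Nat.card_mono (Set.toFinite _) hsub
        _ = P.roots.toFinset.card := by
            rw [Nat.card_coe_set_eq, Set.ncard_coe_finset]
        _ ≤ P.natDegree := le_trans (Multiset.toFinset_card_le _) P.card_roots'
        _ ≤ q ^ (n - d) := hdeg
    have hker : Nat.card (LinearMap.ker (gabMap (F := F) m c)) =
        q ^ Module.finrank F (LinearMap.ker (gabMap (F := F) m c)) := by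
      rw [Nat.card_eq_fintype_card]
      exact Module.card_eq_pow_finrank (K := F)
    rw [hker] at hcard
    have hkle : Module.finrank F (LinearMap.ker (gabMap (F := F) m c)) ≤ n - d :=
      (Nat.pow_le_pow_iff_right hq2).mp hcard
    have hrn := LinearMap.finrank_range_add_finrank_ker (gabMap (F := F) m c)
    rw [hK] at hrn
    show d ≤ Module.finrank F (LinearMap.range (gabMap (F := F) m c))
    omega
end

section
/- Let q be a prime power and m ≤ n. Suppose C is an n-dimensional F_q-subspace of the m×n matrices over F_q such that every nonzero matrix in C has rank m. Then there exists an m-dimensional F_q-subspace W of the n×n matrices over F_q such that every nonzero matrix in W is invertible. -/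
/-- If an `m × n` matrix over a field has rank `m`, its rows are linearly independent,
so `vecMul` by it is injective. -/
lemma vecMul_injective_of_rank_eq {F : Type*} [Field F] {m n : ℕ}
    (X : Matrix (Fin m) (Fin n) F) (h : X.rank = m) :
    Function.Injective X.vecMul := by
  rw [Matrix.vecMul_injective_iff]
  rw [linearIndependent_iff_card_eq_finrank_span]
  rw [Set.finrank, ← Matrix.rank_eq_finrank_span_row, h, Fintype.card_fin]

/-- From an `n`-dimensional space of `m×n` matrices over `F_q` in which
every nonzero element has full rank `m`, one obtains an `m`-dimensional space of `n×n`
matrices in which every nonzero element is invertible. -/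
theorem rectangular_MRD_gives_invertible_space (F : Type*) [Field F] [Fintype F]
    (m n : ℕ) (hmn : m ≤ n)
    (C : Submodule F (Matrix (Fin m) (Fin n) F))
    (hdim : Module.finrank F C = n)
    (hrank : ∀ X ∈ C, X ≠ 0 → X.rank = m) :
    ∃ W : Submodule F (Matrix (Fin n) (Fin n) F),
      Module.finrank F W = m ∧ ∀ Y ∈ W, Y ≠ 0 → IsUnit Y := by
  rcases Nat.eq_zero_or_pos m with hm | hm
  · refine ⟨⊥, by simp [hm], ?_⟩
    intro Y hY hY0
    exact absurd ((Submodule.mem_bot F).mp hY) hY0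
  have hn : 0 < n := lt_of_lt_of_le hm hmn
  -- a basis of C
  have hC : FiniteDimensional F C := inferInstance
  let b : Module.Basis (Fin n) F C := Module.finBasisOfFinrankEq F C hdim
  let E : Fin n → Matrix (Fin m) (Fin n) F := fun i => (b i : Matrix (Fin m) (Fin n) F)
  -- key: vecMul by any nonzero element of C is injective
  have key : ∀ X ∈ C, X ≠ 0 → ∀ a : Fin m → F, X.vecMul a = 0 → a = 0 := by
    intro X hX hX0 a ha
    have := vecMul_injective_of_rank_eq X (hrank X hX hX0)
    have h0 : X.vecMul a = X.vecMul 0 := by simp [ha]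
    exact this h0
  -- the linear map a ↦ M_a
  let Φ : (Fin m → F) →ₗ[F] Matrix (Fin n) (Fin n) F :=
    { toFun := fun a => Matrix.of fun i j => (E i).vecMul a j
      map_add' := by
        intro a a'
        ext i j
        simp [Matrix.add_vecMul]
      map_smul' := by
        intro c a
        ext i j
        simp [Matrix.smul_vecMul] }
  have hΦapp : ∀ (a : Fin m → F) (i : Fin n), (Φ a) i = (E i).vecMul a := by
    intro a i; rfl
  -- the crucial computation: v ⬝ (Φ a) = a-row-action on ∑ v i • E i
  have hcomp : ∀ (a : Fin m → F) (v : Fin n → F),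
      (Φ a).vecMul v = (∑ i, v i • E i).vecMul a := by
    intro a v
    funext j
    simp only [Φ, LinearMap.coe_mk, AddHom.coe_mk, Matrix.vecMul, dotProduct,
      Matrix.of_apply, Matrix.sum_apply, Matrix.smul_apply, smul_eq_mul, Finset.mul_sum]
    rw [Finset.sum_comm]
    refine Finset.sum_congr rfl fun k _ => Finset.sum_congr rfl fun i _ => by ring
  -- Φ is injective
  have hinj : Function.Injective Φ := by
    rw [← LinearMap.ker_eq_bot]
    rw [LinearMap.ker_eq_bot']
    intro a ha
    have hE0 : E ⟨0, hn⟩ ≠ 0 := by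
      have := b.ne_zero ⟨0, hn⟩
      simpa [E, Submodule.coe_eq_zero] using this
    have h1 : (E ⟨0, hn⟩).vecMul a = 0 := by
      have := congr_fun (congr_arg (fun M : Matrix (Fin n) (Fin n) F => M ⟨0, hn⟩) ha)
      funext j
      simpa [hΦapp] using this j
    exact key _ (b ⟨0, hn⟩).2 hE0 a h1
  refine ⟨LinearMap.range Φ, ?_, ?_⟩
  · rw [LinearMap.finrank_range_of_inj hinj]
    simp
  · rintro Y ⟨a, rfl⟩ hY0
    have ha : a ≠ 0 := by rintro rfl; simp at hY0
    rw [← Matrix.vecMul_injective_iff_isUnit]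
    rw [Matrix.vecMul_injective_iff]
    rw [Fintype.linearIndependent_iff]
    intro v hv i
    by_contra hvi
    have hv0 : v ≠ 0 := fun h => hvi (by rw [h]; rfl)
    -- ∑ v i • row i = v ⬝ (Φ a)
    have hrow : (Φ a).vecMul v = 0 := by
      funext j
      have := congr_fun hv j
      simpa [Matrix.vecMul, dotProduct] using this
    rw [hcomp] at hrow
    set X : Matrix (Fin m) (Fin n) F := ∑ i, v i • E i with hX
    have hXC : X ∈ C := by
      apply Submodule.sum_mem
      intro i _
      exact Submodule.smul_mem _ _ (b i).2
    have hX0 : X ≠ 0 := by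
      intro h
      have : (∑ i, v i • b i : C) = 0 := by
        apply Subtype.ext
        push_cast
        exact h
      have hvz := (Fintype.linearIndependent_iff.mp b.linearIndependent) v this
      exact hv0 (funext hvz)
    exact ha (key X hXC hX0 a hrow)
end
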